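/- Let X and Y be Fréchet spaces (complete metrizable locally convex topological vector spaces), U ⊆ X open, and f : U → Y. Suppose f has a Gâteaux derivative f'(x)y at every x ∈ U which is linear in y and such that the map (x,y) ↦ f'(x)y is jointly continuous from U × X to Y. Then f is Fréchet differentiable on U in the sense of Schwartz: for each x ∈ U, the remainder φ(y) = f(x+y) − f(x) − f'(x)y is horizontal at 0, i.e., for every continuous seminorm q on Y and ε > 0 there exist a continuous seminorm p on X and δ > 0 such that q(φ(ty)) ≤ ε|t| whenever p(y) < 1 and |t| ≤ δ. -/

import Mathlib

open Filter Topology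
open Set

/-- Mean value inequality for seminorms in a topological vector space. -/
lemma mvt_seminorm {Y : Type*} [AddCommGroup Y] [Module ℝ Y] [TopologicalSpace Y]
    [IsTopologicalAddGroup Y] [ContinuousSMul ℝ Y]
    (g g' : ℝ → Y) (q : Seminorm ℝ Y) (hq : Continuous fun v => q v) (M : ℝ)
    (hderiv : ∀ s ∈ Icc (0:ℝ) 1,
      Tendsto (fun h : ℝ => h⁻¹ • (g (s + h) - g s)) (𝓝[≠] 0) (𝓝 (g' s)))
    (hM : ∀ s ∈ Icc (0:ℝ) 1, q (g' s) ≤ M) : q (g 1 - g 0) ≤ M := by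
  have hgc : ∀ s ∈ Icc (0:ℝ) 1, ContinuousAt g s := by
    intro s hs
    have h2 : Tendsto (fun h : ℝ => h • (h⁻¹ • (g (s + h) - g s))) (𝓝[≠] 0)
        (𝓝 ((0:ℝ) • g' s)) :=
      (tendsto_nhdsWithin_of_tendsto_nhds tendsto_id).smul (hderiv s hs)
    rw [zero_smul] at h2
    have h1 : Tendsto (fun h : ℝ => g (s + h) - g s) (𝓝[≠] 0) (𝓝 0) := by
      refine h2.congr' ?_
      filter_upwards [eventually_mem_nhdsWithin] with h hh
      rw [smul_inv_smul₀ hh]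
    have h3 : Tendsto (fun h : ℝ => g (s + h) - g s) (𝓝 0) (𝓝 0) := by
      rw [← nhdsNE_sup_pure (0:ℝ), tendsto_sup]
      refine ⟨h1, ?_⟩
      have := tendsto_pure_nhds (fun h : ℝ => g (s + h) - g s) 0
      simpa using this
    have h4 : Tendsto (fun h : ℝ => g (s + h)) (𝓝 0) (𝓝 (g s)) := by
      have := h3.add_const (g s)
      simpa using this
    rw [ContinuousAt, ← map_add_left_nhds_zero s, tendsto_map'_iff]
    exact h4
  set F : ℝ → ℝ := fun s => q (g s - g 0) with hF
  have key : ∀ z ∈ Icc (0:ℝ) 1, F z ≤ M * z := by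
    intro z hz
    refine image_le_of_liminf_slope_right_le_deriv_boundary
      (f := F) (B := fun s => M * s) (B' := fun _ => M) ?_ ?_ ?_ ?_ ?_ hz
    · have hgOn : ContinuousOn g (Icc (0:ℝ) 1) := fun s hs => (hgc s hs).continuousWithinAt
      exact hq.comp_continuousOn (hgOn.sub continuousOn_const)
    · simp [F]
    · exact (continuous_const.mul continuous_id).continuousOn
    · intro s _
      simpa using ((hasDerivAt_id s).const_mul M).hasDerivWithinAt
    · intro s hs r hr
      have hs' : s ∈ Icc (0:ℝ) 1 := Ico_subset_Icc_self hs
      have hr' : q (g' s) < r := lt_of_le_of_lt (hM s hs') hr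
      have h5 : Tendsto (fun h : ℝ => q (h⁻¹ • (g (s + h) - g s))) (𝓝[≠] 0)
          (𝓝 (q (g' s))) := (hq.tendsto (g' s)).comp (hderiv s hs')
      have hmap : Tendsto (fun z : ℝ => z - s) (𝓝[>] s) (𝓝[≠] (0:ℝ)) := by
        apply tendsto_nhdsWithin_of_tendsto_nhds_of_eventually_within
        · have : Tendsto (fun z : ℝ => z - s) (𝓝 s) (𝓝 (s - s)) :=
            (continuous_id.sub continuous_const).tendsto s
          simpa using this.mono_left nhdsWithin_le_nhds
        · filter_upwards [eventually_mem_nhdsWithin] with z hz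
          exact sub_ne_zero.2 (ne_of_gt hz)
      have h5' : Tendsto (fun z : ℝ => q ((z - s)⁻¹ • (g z - g s))) (𝓝[>] s)
          (𝓝 (q (g' s))) := by
        have := h5.comp hmap
        refine this.congr fun z => ?_
        simp [Function.comp, show s + (z - s) = z from by ring]
      have h8 : ∀ᶠ z in 𝓝[>] s, q ((z - s)⁻¹ • (g z - g s)) < r :=
        h5' (Iio_mem_nhds hr')
      refine ((h8.and eventually_mem_nhdsWithin).mono ?_).frequently
      rintro z ⟨hz1, hz2⟩
      have hd : (0:ℝ) < z - s := sub_pos.2 hz2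
      have hFle : F z - F s ≤ q (g z - g s) := by
        have h9 := map_add_le_add q (g z - g s) (g s - g 0)
        rw [sub_add_sub_cancel] at h9
        simp only [F]
        linarith
      have hz1' : q (g z - g s) / (z - s) < r := by
        rwa [map_smul_eq_mul, Real.norm_eq_abs, abs_of_pos (inv_pos.2 hd),
          inv_mul_eq_div] at hz1
      calc slope F s z = (F z - F s) / (z - s) := slope_def_field F s z
        _ ≤ q (g z - g s) / (z - s) := by gcongr
        _ < r := hz1'
  have := key 1 ⟨zero_le_one, le_refl 1⟩
  simpa [F] using this


/-- Schwartz-type Fréchet differentiability from continuous Gâteaux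
differentiability in Fréchet spaces.  If `f : U → Y` has a Gâteaux derivative
`f'(x)y` at every `x ∈ U`, linear in `y`, with `(x,y) ↦ f'(x)y` jointly
continuous, then for each `x ∈ U` the remainder
`φ(y) = f(x+y) − f(x) − f'(x)y` is horizontal at `0`: for every continuous
seminorm `q` on `Y` and `ε > 0` there are a continuous seminorm `p` on `X` and
`δ > 0` with `q(φ(ty)) ≤ ε|t|` whenever `p(y) < 1` and `|t| ≤ δ`. -/
theorem stmt_10 {X Y : Type*}
    [AddCommGroup X] [Module ℝ X] [UniformSpace X] [IsUniformAddGroup X]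
    [ContinuousSMul ℝ X] [LocallyConvexSpace ℝ X] [CompleteSpace X]
    [TopologicalSpace.PseudoMetrizableSpace X]
    [AddCommGroup Y] [Module ℝ Y] [UniformSpace Y] [IsUniformAddGroup Y]
    [ContinuousSMul ℝ Y] [LocallyConvexSpace ℝ Y] [CompleteSpace Y]
    [TopologicalSpace.PseudoMetrizableSpace Y]
    (U : Set X) (hU : IsOpen U) (f : X → Y) (f' : X → X →ₗ[ℝ] Y)
    (hG : ∀ x ∈ U, ∀ y : X,
      Tendsto (fun t : ℝ => t⁻¹ • (f (x + t • y) - f x)) (𝓝[≠] 0) (𝓝 (f' x y)))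
    (hcont : ContinuousOn (fun p : X × X => f' p.1 p.2) (U ×ˢ Set.univ)) :
    ∀ x ∈ U, ∀ q : Seminorm ℝ Y, Continuous (fun v => q v) → ∀ ε > 0,
      ∃ p : Seminorm ℝ X, Continuous (fun v => p v) ∧ ∃ δ > 0, ∀ y : X, p y < 1 →
        ∀ t : ℝ, |t| ≤ δ → q (f (x + t • y) - f x - f' x (t • y)) ≤ ε * |t| := by
  intro x hx q hq ε hε
  -- continuity of (x', v) ↦ q (f' x' v) at (x, 0)
  have hca : ContinuousAt (fun p : X × X => q (f' p.1 p.2)) (x, 0) := by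
    refine hq.continuousAt.comp ?_
    exact hcont.continuousAt ((hU.prod isOpen_univ).mem_nhds ⟨hx, trivial⟩)
  have hval : q (f' x (0:X)) < ε / 2 := by
    simp [map_zero]; positivity
  have hT : {p : X × X | q (f' p.1 p.2) < ε / 2} ∈ 𝓝 ((x, (0:X))) :=
    hca (Iio_mem_nhds hval)
  rw [mem_nhds_prod_iff] at hT
  obtain ⟨A, hA, N, hN, hAN⟩ := hT
  have hxA : x ∈ A := mem_of_mem_nhds hA
  -- neighborhood of 0 mapping into A ∩ U
  have hWnhds : {v : X | x + v ∈ A ∩ U} ∈ 𝓝 (0:X) := by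
    have hct : ContinuousAt (fun v : X => x + v) 0 :=
      (continuous_const.add continuous_id).continuousAt
    have := hct (show A ∩ U ∈ 𝓝 ((fun v : X => x + v) 0) by
      simpa using inter_mem hA (hU.mem_nhds hx))
    exact this
  -- absolutely convex open V inside N ∩ W
  obtain ⟨V, ⟨h0V, hVopen, hVbal, hVconv⟩, hVsub⟩ :=
    (nhds_hasBasis_absConvex_open ℝ X).mem_iff.1 (inter_mem hN hWnhds)
  have hVnhds : V ∈ 𝓝 (0:X) := hVopen.mem_nhds h0V
  have habs : Absorbent ℝ V := absorbent_nhds_zero hVnhds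
  refine ⟨gaugeSeminorm hVbal hVconv habs, ?_, 1/2, by norm_num, ?_⟩
  · exact continuous_gauge hVconv hVnhds
  intro y hpy t ht
  have hyV : y ∈ V := gauge_lt_one_subset_self hVconv h0V habs hpy
  -- all small multiples of y land in V, hence in A ∩ U shifted
  have hmem : ∀ c : ℝ, |c| ≤ 1 → x + c • y ∈ A ∩ U := by
    intro c hc
    have : c • y ∈ V := hVbal.smul_mem (by rwa [Real.norm_eq_abs]) hyV
    exact (hVsub this).2
  rcases eq_or_ne t 0 with rfl | ht0
  · simp
  set v : X := t • y with hv
  set g : ℝ → Y := fun s => f (x + s • v) - f x - s • (f' x v) with hg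
  have hxs : ∀ s : ℝ, s ∈ Icc (0:ℝ) 1 → x + s • v ∈ U := by
    intro s hs
    have : x + (s * t) • y ∈ A ∩ U := by
      refine hmem (s * t) ?_
      rw [abs_mul, abs_of_nonneg hs.1]
      nlinarith [hs.1, hs.2, abs_nonneg t]
    rw [hv, smul_smul]; exact this.2
  have hxsA : ∀ s : ℝ, s ∈ Icc (0:ℝ) 1 → x + s • v ∈ A := by
    intro s hs
    have : x + (s * t) • y ∈ A ∩ U := by
      refine hmem (s * t) ?_
      rw [abs_mul, abs_of_nonneg hs.1]
      nlinarith [hs.1, hs.2, abs_nonneg t]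
    rw [hv, smul_smul]; exact this.1
  have hderiv : ∀ s ∈ Icc (0:ℝ) 1,
      Tendsto (fun h : ℝ => h⁻¹ • (g (s + h) - g s)) (𝓝[≠] 0)
        (𝓝 (f' (x + s • v) v - f' x v)) := by
    intro s hs
    have h1 := hG (x + s • v) (hxs s hs) v
    have h2 : Tendsto (fun h : ℝ =>
        h⁻¹ • (f (x + s • v + h • v) - f (x + s • v)) - f' x v) (𝓝[≠] 0)
        (𝓝 (f' (x + s • v) v - f' x v)) := h1.sub_const _
    refine h2.congr' ?_
    filter_upwards [eventually_mem_nhdsWithin] with h hh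
    have : g (s + h) - g s
        = (f (x + s • v + h • v) - f (x + s • v)) - h • (f' x v) := by
      simp only [g, add_smul, add_assoc]
      abel
    simp only [this, smul_sub, smul_smul, inv_mul_cancel₀ hh, one_smul]
  have hM : ∀ s ∈ Icc (0:ℝ) 1, q (f' (x + s • v) v - f' x v) ≤ ε * |t| := by
    intro s hs
    have hyN : y ∈ N := (hVsub hyV).1
    have hq1 : q (f' (x + s • v) y) < ε / 2 := hAN (Set.mk_mem_prod (hxsA s hs) hyN)
    have hq2 : q (f' x y) < ε / 2 := hAN (Set.mk_mem_prod hxA hyN)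
    have heq : f' (x + s • v) v - f' x v
        = t • (f' (x + s • v) y - f' x y) := by
      rw [hv, map_smul, map_smul, smul_sub]
    rw [heq, map_smul_eq_mul, Real.norm_eq_abs, mul_comm (ε) (|t|)]
    have : q (f' (x + s • v) y - f' x y) ≤ ε := by
      have h3 := map_sub_le_add q (f' (x + s • v) y) (f' x y)
      linarith
    exact mul_le_mul_of_nonneg_left this (abs_nonneg t)
  have hmvt := mvt_seminorm g (fun s => f' (x + s • v) v - f' x v) q hq (ε * |t|)
    hderiv hM
  have hg10 : g 1 - g 0 = f (x + t • y) - f x - f' x (t • y) := by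
    simp [g, hv]
  rwa [hg10] at hmvt
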